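/- Let k be a field, V₀ a k-vector space, and V₁,…,Vₙ subspaces of V₀. Define V_i^rig = V_i ∩ (∑_{j≠i} V_j) for 1 ≤ i ≤ n. Then there is a short exact sequence of vector spaces 0 → ⊕_{i=1}^n (V_i / V_i^rig) → V₀ / (∑_{i=1}^n V_i^rig) → V₀ / (∑_{i=1}^n V_i) → 0, where the first map is induced by the inclusions V_i ⊆ V₀ and the second is the natural projection. -/

import Mathlib

/-- For an `n`-subspace `(V₀; V₁,…,Vₙ)` with rigidification `V_i^rig = V_i ∩ ∑_{j≠i} V_j`,
there is a short exact sequence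
`0 → ⊕ᵢ Vᵢ/Vᵢ^rig → V₀/(∑ᵢ Vᵢ^rig) → V₀/(∑ᵢ Vᵢ) → 0`,
where the first map is induced by the inclusions `Vᵢ ⊆ V₀` and the second map is the
natural projection. -/
theorem rigidification_ses (k : Type*) [Field k] (V₀ : Type*) [AddCommGroup V₀]
    [Module k V₀] (n : ℕ) (V : Fin n → Submodule k V₀) :
    let Vrig : Fin n → Submodule k V₀ := fun i => V i ⊓ ⨆ j ∈ ({i}ᶜ : Set (Fin n)), V j
    let Srig : Submodule k V₀ := ⨆ i, Vrig i
    let S : Submodule k V₀ := ⨆ i, V i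
    ∃ (f : (Π i, (↥(V i) ⧸ (Vrig i).comap (V i).subtype)) →ₗ[k] (V₀ ⧸ Srig))
      (g : (V₀ ⧸ Srig) →ₗ[k] (V₀ ⧸ S)),
      (∀ (i : Fin n) (x : V i),
        f (Pi.single i (Submodule.Quotient.mk x)) = Submodule.Quotient.mk (x : V₀)) ∧
      (∀ x : V₀, g (Submodule.Quotient.mk x) = Submodule.Quotient.mk x) ∧
      Function.Injective f ∧ Function.Surjective g ∧ LinearMap.range f = LinearMap.ker g := by
  intro Vrig Srig S
  have hVrigSrig : ∀ i, Vrig i ≤ Srig := fun i => le_iSup Vrig i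
  have hSrigS : Srig ≤ S := iSup_le fun i => le_trans inf_le_left (le_iSup V i)
  have hmem_compl : ∀ (i j : Fin n), j ≠ i → V j ≤ ⨆ j ∈ ({i}ᶜ : Set (Fin n)), V j := by
    intro i j hj
    exact le_iSup₂ (f := fun l (_ : l ∈ ({i}ᶜ : Set (Fin n))) => V l) j hj
  have hSrig_compl : ∀ i : Fin n, Srig ≤ ⨆ j ∈ ({i}ᶜ : Set (Fin n)), V j := by
    intro i
    refine iSup_le fun l => ?_
    by_cases hl : l = i
    · subst hl; exact inf_le_right
    · exact le_trans inf_le_left (hmem_compl i l hl)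
  -- the component maps
  have hker : ∀ i : Fin n, (Vrig i).comap (V i).subtype ≤
      LinearMap.ker (Srig.mkQ ∘ₗ (V i).subtype) := by
    intro i x hx
    simp only [LinearMap.mem_ker, LinearMap.comp_apply, Submodule.mkQ_apply,
      Submodule.Quotient.mk_eq_zero]
    exact hVrigSrig i hx
  set fi : ∀ i : Fin n, (↥(V i) ⧸ (Vrig i).comap (V i).subtype) →ₗ[k] V₀ ⧸ Srig :=
    fun i => Submodule.liftQ _ (Srig.mkQ ∘ₗ (V i).subtype) (hker i) with hfi
  have hfi_mk : ∀ (i : Fin n) (x : V i),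
      fi i (Submodule.Quotient.mk x) = Submodule.Quotient.mk (x : V₀) := by
    intro i x; simp [hfi]
  set f : (Π i, (↥(V i) ⧸ (Vrig i).comap (V i).subtype)) →ₗ[k] V₀ ⧸ Srig :=
    ∑ i, (fi i).comp (LinearMap.proj i) with hf
  have hf_apply : ∀ p, f p = ∑ i, fi i (p i) := by
    intro p; simp [hf]
  have hf_single : ∀ (i : Fin n) (x : V i),
      f (Pi.single i (Submodule.Quotient.mk x)) = Submodule.Quotient.mk (x : V₀) := by
    intro i x
    rw [hf_apply, Finset.sum_eq_single i]
    · rw [Pi.single_eq_same, hfi_mk]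
    · intro j _ hj
      rw [Pi.single_eq_of_ne hj, map_zero]
    · intro h; exact absurd (Finset.mem_univ i) h
  set g : (V₀ ⧸ Srig) →ₗ[k] (V₀ ⧸ S) := Submodule.mapQ Srig S LinearMap.id hSrigS with hg
  have hg_mk : ∀ x : V₀, g (Submodule.Quotient.mk x) = Submodule.Quotient.mk x := by
    intro x; simp [hg, Submodule.mapQ_apply]
  refine ⟨f, g, hf_single, hg_mk, ?_, ?_, ?_⟩
  · -- injectivity
    rw [← LinearMap.ker_eq_bot, eq_bot_iff]
    intro p hp
    simp only [LinearMap.mem_ker] at hp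
    choose y hy using fun i => Submodule.Quotient.mk_surjective _ (p i)
    have hsum : f p = Submodule.Quotient.mk (∑ i, ((y i : V₀))) := by
      rw [hf_apply]
      rw [← Submodule.mkQ_apply, map_sum]
      refine Finset.sum_congr rfl fun i _ => ?_
      rw [← hy i, hfi_mk, Submodule.mkQ_apply]
    rw [hp] at hsum
    have hS : (∑ i, ((y i : V₀))) ∈ Srig := by
      rw [← Submodule.Quotient.mk_eq_zero, ← hsum]
    have hyVrig : ∀ i, (y i : V₀) ∈ Vrig i := by
      intro i
      refine ⟨(y i).2, ?_⟩
      have heq : (y i : V₀) = (∑ j, ((y j : V₀))) - ∑ j ∈ Finset.univ.erase i, ((y j : V₀)) :=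
        eq_sub_iff_add_eq.mpr (Finset.add_sum_erase Finset.univ (fun j => ((y j : V₀))) (Finset.mem_univ i))
      rw [heq]
      refine sub_mem (hSrig_compl i hS) (Submodule.sum_mem _ fun j hj => ?_)
      exact hmem_compl i j (Finset.ne_of_mem_erase hj) (y j).2
    simp only [Submodule.mem_bot]
    funext i
    rw [← hy i, Pi.zero_apply, Submodule.Quotient.mk_eq_zero]
    exact hyVrig i
  · -- surjectivity
    intro q
    obtain ⟨x, rfl⟩ := Submodule.Quotient.mk_surjective _ q
    exact ⟨Submodule.Quotient.mk x, hg_mk x⟩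
  · -- exactness
    apply le_antisymm
    · rintro _ ⟨p, rfl⟩
      simp only [LinearMap.mem_ker, hf_apply, map_sum]
      refine Finset.sum_eq_zero fun i _ => ?_
      obtain ⟨y, hy⟩ := Submodule.Quotient.mk_surjective _ (p i)
      rw [← hy, hfi_mk, hg_mk, Submodule.Quotient.mk_eq_zero]
      exact le_iSup V i y.2
    · intro q hq
      obtain ⟨x, rfl⟩ := Submodule.Quotient.mk_surjective _ q
      simp only [LinearMap.mem_ker, hg_mk, Submodule.Quotient.mk_eq_zero] at hq
      -- x ∈ S = ⨆ V i; show mk x ∈ range f by induction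
      refine Submodule.iSup_induction (motive := fun z => Srig.mkQ z ∈ LinearMap.range f)
        V hq ?_ ?_ ?_
      · intro i z hz
        exact ⟨Pi.single i (Submodule.Quotient.mk ⟨z, hz⟩), hf_single i ⟨z, hz⟩⟩
      · exact ⟨0, map_zero f⟩
      · intro a b ha hb
        rw [map_add]
        exact add_mem ha hb
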